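/- Let G be a finite group, m ≥ 1, and ρ_1, …, ρ_m irreducible representations of G on nonzero finite-dimensional complex vector spaces, with characters χ_1, …, χ_m. Let ψ_j : Z(G) → ℂ^× be the homomorphisms on the center Z(G) determined by ρ_j(z) = ψ_j(z)·id for z ∈ Z(G). Assume (i) for every h ≠ 1 in G there is j with ρ_j(h) ≠ id, and (ii) the characters ψ_j·ψ_1⁻¹ (j = 1, …, m) generate the full character group Hom(Z(G), ℂ^×). Define Φ : G → ℂ^({1,…,m} × G) by Φ(h)(j, g) := Σ_{γ∈G} χ_j(g h⁻¹ γ)·χ_j(γ⁻¹). Then for all h, k ∈ G and λ ∈ ℂ: if Φ(h)(j, g) = λ·Φ(k)(j, g) for every j and every g ∈ G, then h = k. -/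

import Mathlib

open scoped BigOperators

open LinearMap TensorProduct

section Aux

variable {G : Type*} [Group G] [Fintype G]
variable {V : Type*} [AddCommGroup V] [Module ℂ V] [FiniteDimensional ℂ V] [Nontrivial V]
variable (r : Representation ℂ G V)

/-- Schur's lemma: an endomorphism commuting with an irreducible representation is scalar. -/
lemma aux_schur
    (hirr : ∀ p : Submodule ℂ V, (∀ g : G, ∀ x ∈ p, r g x ∈ p) → p = ⊥ ∨ p = ⊤)
    (f : V →ₗ[ℂ] V) (hf : ∀ g : G, r g * f = f * r g) : ∃ μ : ℂ, f = μ • 1 := by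
  obtain ⟨μ, hμ⟩ := Module.End.exists_eigenvalue f
  refine ⟨μ, ?_⟩
  have h1 : ∀ g : G, ∀ x ∈ LinearMap.ker (f - μ • 1), r g x ∈ LinearMap.ker (f - μ • 1) := by
    intro g x hx
    rw [LinearMap.mem_ker] at hx ⊢
    have hx' : f x - μ • x = 0 := by simpa using hx
    have hgf : r g (f x) = f (r g x) := congrFun (congrArg DFunLike.coe (hf g)) x
    have : f (r g x) - μ • (r g x) = r g (f x - μ • x) := by
      rw [map_sub, map_smul, hgf]
    simp [this, hx']
  rcases hirr _ h1 with hbot | htop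
  · exfalso
    obtain ⟨v, hv⟩ := hμ.exists_hasEigenvector
    have hvmem : v ∈ LinearMap.ker (f - μ • 1) := by
      rw [LinearMap.mem_ker]
      have : f v = μ • v := Module.End.mem_eigenspace_iff.mp hv.1
      simp [this]
    rw [hbot] at hvmem
    exact hv.2 (by simpa using hvmem)
  · ext x
    have hx : x ∈ LinearMap.ker (f - μ • 1) := htop ▸ Submodule.mem_top
    rw [LinearMap.mem_ker] at hx
    have : f x - μ • x = 0 := by simpa using hx
    simpa [sub_eq_zero] using this

/-- Averaging an endomorphism over the group yields a scalar. -/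
lemma aux_avg
    (hirr : ∀ p : Submodule ℂ V, (∀ g : G, ∀ x ∈ p, r g x ∈ p) → p = ⊥ ∨ p = ⊤)
    (f : V →ₗ[ℂ] V) :
    (∑ γ : G, r γ * f * r γ⁻¹)
      = (((Fintype.card G : ℂ) * LinearMap.trace ℂ V f) / (Module.finrank ℂ V : ℂ)) • 1 := by
  have hd : ((Module.finrank ℂ V : ℂ)) ≠ 0 := by
    exact_mod_cast (Module.finrank_pos (R := ℂ) (M := V)).ne'
  have hcom : ∀ g : G, r g * (∑ γ : G, r γ * f * r γ⁻¹) = (∑ γ : G, r γ * f * r γ⁻¹) * r g := by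
    intro g
    rw [Finset.mul_sum, Finset.sum_mul]
    refine Fintype.sum_equiv (Equiv.mulLeft g) _ _ ?_
    intro γ
    have h1 : r g * (r γ * f * r γ⁻¹) = r (g * γ) * f * r γ⁻¹ := by
      rw [map_mul r g γ]; simp [mul_assoc]
    have h2 : r (g * γ) * f * r (g * γ)⁻¹ * r g = r (g * γ) * f * r γ⁻¹ := by
      rw [mul_assoc, ← map_mul]
      congr 2
      group
    rw [h1, Equiv.coe_mulLeft, h2]
  obtain ⟨μ, hμ⟩ := aux_schur r hirr _ hcom
  have htr : LinearMap.trace ℂ V (∑ γ : G, r γ * f * r γ⁻¹)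
      = (Fintype.card G : ℂ) * LinearMap.trace ℂ V f := by
    rw [map_sum]
    have : ∀ γ : G, LinearMap.trace ℂ V (r γ * f * r γ⁻¹) = LinearMap.trace ℂ V f := by
      intro γ
      rw [LinearMap.trace_mul_comm, ← mul_assoc, ← map_mul r γ⁻¹ γ, inv_mul_cancel, map_one,
        one_mul]
    rw [Finset.sum_congr rfl fun γ _ => this γ]
    simp [Finset.sum_const, mul_comm]
  have htr2 : LinearMap.trace ℂ V (∑ γ : G, r γ * f * r γ⁻¹) = μ * (Module.finrank ℂ V : ℂ) := by
    rw [hμ, map_smul, trace_one]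
    simp [smul_eq_mul]
  have hμval : μ = ((Fintype.card G : ℂ) * LinearMap.trace ℂ V f) / (Module.finrank ℂ V : ℂ) := by
    field_simp
    rw [← htr2, htr]
  rw [hμ, hμval]

/-- First orthogonality for an irreducible character. -/
lemma aux_orth
    (hirr : ∀ p : Submodule ℂ V, (∀ g : G, ∀ x ∈ p, r g x ∈ p) → p = ⊥ ∨ p = ⊤) :
    (∑ γ : G, LinearMap.trace ℂ V (r γ) * LinearMap.trace ℂ V (r γ⁻¹))
      = (Fintype.card G : ℂ) := by
  have hd : ((Module.finrank ℂ V : ℂ)) ≠ 0 := by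
    exact_mod_cast (Module.finrank_pos (R := ℂ) (M := V)).ne'
  set e : Module.Dual ℂ V ⊗[ℂ] V ≃ₗ[ℂ] (V →ₗ[ℂ] V) := dualTensorHomEquiv ℂ V V with he
  have heapp : ∀ x : Module.Dual ℂ V ⊗[ℂ] V, e x = dualTensorHom ℂ V V x := fun x =>
    rfl
  -- the conjugation operators
  have hc : ∀ γ : G, (LinearMap.mulLeft ℂ (r γ)) ∘ₗ (LinearMap.mulRight ℂ (r γ⁻¹))
      = e.conj (TensorProduct.map (Module.Dual.transpose (R := ℂ) (r γ⁻¹)) (r γ)) := by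
    intro γ
    have key : ∀ x : Module.Dual ℂ V ⊗[ℂ] V,
        ((LinearMap.mulLeft ℂ (r γ)) ∘ₗ (LinearMap.mulRight ℂ (r γ⁻¹)))
          (dualTensorHom ℂ V V x)
        = dualTensorHom ℂ V V
            ((TensorProduct.map (Module.Dual.transpose (R := ℂ) (r γ⁻¹)) (r γ)) x) := by
      intro x
      induction x using TensorProduct.induction_on with
      | zero => simp
      | tmul φ v =>
          ext w
          simp [Module.End.mul_apply, dualTensorHom_apply, Module.Dual.transpose_apply,
            map_smul]
      | add x y hx hy => simp [map_add, hx, hy]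
    apply LinearMap.ext
    intro f
    obtain ⟨x, rfl⟩ := e.surjective f
    rw [LinearEquiv.conj_apply]
    simp only [LinearMap.coe_comp, Function.comp_apply, LinearEquiv.coe_coe,
      LinearEquiv.symm_apply_apply]
    rw [heapp, heapp]
    exact key x
  have hctr : ∀ γ : G,
      LinearMap.trace ℂ _ ((LinearMap.mulLeft ℂ (r γ)) ∘ₗ (LinearMap.mulRight ℂ (r γ⁻¹)))
        = LinearMap.trace ℂ V (r γ) * LinearMap.trace ℂ V (r γ⁻¹) := by
    intro γ
    rw [hc γ, LinearMap.trace_conj', trace_tensorProduct', trace_transpose']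
    ring
  -- the summed operator equals a multiple of the "trace" rank-one operator
  have hsum : (∑ γ : G, (LinearMap.mulLeft ℂ (r γ)) ∘ₗ (LinearMap.mulRight ℂ (r γ⁻¹)))
      = ((Fintype.card G : ℂ) / (Module.finrank ℂ V : ℂ)) •
          (dualTensorHom ℂ (V →ₗ[ℂ] V) (V →ₗ[ℂ] V)
            ((LinearMap.trace ℂ V) ⊗ₜ[ℂ] (1 : V →ₗ[ℂ] V))) := by
    apply LinearMap.ext
    intro f
    have hL : (∑ γ : G, (LinearMap.mulLeft ℂ (r γ)) ∘ₗ (LinearMap.mulRight ℂ (r γ⁻¹))) f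
        = ∑ γ : G, r γ * f * r γ⁻¹ := by
      rw [LinearMap.sum_apply]
      refine Finset.sum_congr rfl fun γ _ => ?_
      simp [LinearMap.mulLeft_apply, LinearMap.mulRight_apply, mul_assoc]
    rw [hL, aux_avg r hirr f]
    simp only [LinearMap.smul_apply, dualTensorHom_apply, smul_smul]
    congr 1
    ring
  have htr1 : LinearMap.trace ℂ _
      (∑ γ : G, (LinearMap.mulLeft ℂ (r γ)) ∘ₗ (LinearMap.mulRight ℂ (r γ⁻¹)))
      = ∑ γ : G, LinearMap.trace ℂ V (r γ) * LinearMap.trace ℂ V (r γ⁻¹) := by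
    rw [map_sum]
    exact Finset.sum_congr rfl fun γ _ => hctr γ
  have htr2 : LinearMap.trace ℂ _
      (((Fintype.card G : ℂ) / (Module.finrank ℂ V : ℂ)) •
        (dualTensorHom ℂ (V →ₗ[ℂ] V) (V →ₗ[ℂ] V)
          ((LinearMap.trace ℂ V) ⊗ₜ[ℂ] (1 : V →ₗ[ℂ] V))))
      = (Fintype.card G : ℂ) := by
    rw [map_smul, trace_eq_contract_apply, contractLeft_apply, trace_one, smul_eq_mul]
    field_simp
  rw [← htr1, hsum, htr2]

/-- The weighted sum `∑ χ(γ⁻¹) • ρ(γ)` is the scalar `|G|/d`. -/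
lemma aux_Q
    (hirr : ∀ p : Submodule ℂ V, (∀ g : G, ∀ x ∈ p, r g x ∈ p) → p = ⊥ ∨ p = ⊤) :
    (∑ γ : G, LinearMap.trace ℂ V (r γ⁻¹) • r γ)
      = ((Fintype.card G : ℂ) / (Module.finrank ℂ V : ℂ)) • 1 := by
  have hd : ((Module.finrank ℂ V : ℂ)) ≠ 0 := by
    exact_mod_cast (Module.finrank_pos (R := ℂ) (M := V)).ne'
  have hconj : ∀ s t : G, LinearMap.trace ℂ V (r (s * t * s⁻¹)) = LinearMap.trace ℂ V (r t) := by
    intro s t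
    rw [map_mul r (s * t) s⁻¹, map_mul r s t, LinearMap.trace_mul_comm, ← mul_assoc,
      ← map_mul r s⁻¹ s, inv_mul_cancel, map_one, one_mul]
  have hcom : ∀ g : G, r g * (∑ γ : G, LinearMap.trace ℂ V (r γ⁻¹) • r γ)
      = (∑ γ : G, LinearMap.trace ℂ V (r γ⁻¹) • r γ) * r g := by
    intro g
    rw [Finset.mul_sum, Finset.sum_mul]
    refine Fintype.sum_equiv ((Equiv.mulLeft g).trans (Equiv.mulRight g⁻¹)) _ _ ?_
    intro γ
    simp only [Equiv.trans_apply, Equiv.coe_mulLeft, Equiv.coe_mulRight]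
    have h1 : r g * (LinearMap.trace ℂ V (r γ⁻¹) • r γ)
        = LinearMap.trace ℂ V (r γ⁻¹) • r (g * γ) := by
      rw [mul_smul_comm, ← map_mul r g γ]
    have h2 : (LinearMap.trace ℂ V (r (g * γ * g⁻¹)⁻¹) • r (g * γ * g⁻¹)) * r g
        = LinearMap.trace ℂ V (r γ⁻¹) • r (g * γ) := by
      rw [smul_mul_assoc, ← map_mul r (g * γ * g⁻¹) g]
      have hg : g * γ * g⁻¹ * g = g * γ := by group
      have hinv : (g * γ * g⁻¹)⁻¹ = g * γ⁻¹ * g⁻¹ := by group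
      rw [hg, hinv, hconj g γ⁻¹]
    rw [h1, h2]
  obtain ⟨μ, hμ⟩ := aux_schur r hirr _ hcom
  have htr : LinearMap.trace ℂ V (∑ γ : G, LinearMap.trace ℂ V (r γ⁻¹) • r γ)
      = (Fintype.card G : ℂ) := by
    rw [map_sum]
    have : ∀ γ : G, LinearMap.trace ℂ V (LinearMap.trace ℂ V (r γ⁻¹) • r γ)
        = LinearMap.trace ℂ V (r γ) * LinearMap.trace ℂ V (r γ⁻¹) := by
      intro γ
      rw [map_smul]
      simp [smul_eq_mul, mul_comm]
    rw [Finset.sum_congr rfl fun γ _ => this γ]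
    exact aux_orth r hirr
  have htr2 : LinearMap.trace ℂ V (∑ γ : G, LinearMap.trace ℂ V (r γ⁻¹) • r γ)
      = μ * (Module.finrank ℂ V : ℂ) := by
    rw [hμ, map_smul, trace_one]
    simp [smul_eq_mul]
  have hμval : μ = (Fintype.card G : ℂ) / (Module.finrank ℂ V : ℂ) := by
    field_simp
    rw [← htr2, htr]
  rw [hμ, hμval]

/-- Convolution formula: `∑ χ(bγ)χ(γ⁻¹) = (|G|/d)·χ(b)`. -/
lemma aux_conv
    (hirr : ∀ p : Submodule ℂ V, (∀ g : G, ∀ x ∈ p, r g x ∈ p) → p = ⊥ ∨ p = ⊤) (b : G) :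
    (∑ γ : G, LinearMap.trace ℂ V (r (b * γ)) * LinearMap.trace ℂ V (r γ⁻¹))
      = ((Fintype.card G : ℂ) / (Module.finrank ℂ V : ℂ)) * LinearMap.trace ℂ V (r b) := by
  have h1 : (∑ γ : G, LinearMap.trace ℂ V (r (b * γ)) * LinearMap.trace ℂ V (r γ⁻¹))
      = LinearMap.trace ℂ V (r b * (∑ γ : G, LinearMap.trace ℂ V (r γ⁻¹) • r γ)) := by
    rw [Finset.mul_sum, map_sum]
    refine Finset.sum_congr rfl fun γ _ => ?_
    rw [mul_smul_comm, map_smul, ← map_mul r b γ]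
    simp [smul_eq_mul, mul_comm]
  rw [h1, aux_Q r hirr, mul_smul_comm, map_smul, mul_one]
  simp [smul_eq_mul]

/-- If `χ(x) = l·χ(xa)` for all `x`, then `ρ(a)` is the scalar `l⁻¹`. -/
lemma aux_scalar
    (hirr : ∀ p : Submodule ℂ V, (∀ g : G, ∀ x ∈ p, r g x ∈ p) → p = ⊥ ∨ p = ⊤)
    (a : G) (l : ℂ) (hl : l ≠ 0)
    (hrel : ∀ x : G, LinearMap.trace ℂ V (r x) = l * LinearMap.trace ℂ V (r (x * a))) :
    r a = l⁻¹ • 1 := by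
  have hd : ((Module.finrank ℂ V : ℂ)) ≠ 0 := by
    exact_mod_cast (Module.finrank_pos (R := ℂ) (M := V)).ne'
  have hn : ((Fintype.card G : ℂ)) ≠ 0 := by
    exact_mod_cast (Fintype.card_pos (α := G)).ne'
  set c : ℂ := (Fintype.card G : ℂ) / (Module.finrank ℂ V : ℂ) with hcdef
  have hc : c ≠ 0 := div_ne_zero hn hd
  have hQ := aux_Q r hirr
  have h2 : (∑ γ : G, LinearMap.trace ℂ V (r γ⁻¹) • r γ)
      = l • (r a * (∑ γ : G, LinearMap.trace ℂ V (r γ⁻¹) • r γ)) := by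
    rw [Finset.mul_sum, Finset.smul_sum]
    refine (Fintype.sum_equiv (Equiv.mulLeft a) _ _ ?_).symm
    intro γ
    simp only [Equiv.coe_mulLeft]
    have h3 : l • (r a * (LinearMap.trace ℂ V (r γ⁻¹) • r γ))
        = (l * LinearMap.trace ℂ V (r γ⁻¹)) • r (a * γ) := by
      rw [mul_smul_comm, ← map_mul r a γ, smul_smul]
    have h4 : LinearMap.trace ℂ V (r (a * γ)⁻¹) = l * LinearMap.trace ℂ V (r γ⁻¹) := by
      have := hrel (γ⁻¹ * a⁻¹)
      have hgg : γ⁻¹ * a⁻¹ * a = γ⁻¹ := by group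
      rw [hgg] at this
      rw [mul_inv_rev, this]
    rw [h3, h4]
  rw [hQ] at h2
  have h5 : c • (1 : V →ₗ[ℂ] V) = (l * c) • r a := by
    rw [h2, mul_smul_comm, mul_one, smul_smul, mul_comm l c]
  have h6 : (1 : V →ₗ[ℂ] V) = l • r a := by
    calc (1 : V →ₗ[ℂ] V) = (c⁻¹ * c) • 1 := by rw [inv_mul_cancel₀ hc, one_smul]
      _ = c⁻¹ • (c • (1 : V →ₗ[ℂ] V)) := by rw [mul_smul]
      _ = c⁻¹ • ((l * c) • r a) := by rw [h5]
      _ = (c⁻¹ * (l * c)) • r a := by simp [smul_smul]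
      _ = l • r a := by
            congr 1
            rw [mul_comm l c, ← mul_assoc, inv_mul_cancel₀ hc, one_mul]
  calc r a = (l⁻¹ * l) • r a := by rw [inv_mul_cancel₀ hl, one_smul]
    _ = l⁻¹ • (l • r a) := by rw [mul_smul]
    _ = l⁻¹ • 1 := by rw [← h6]

end Aux

/-- Proposition 2.13: let `ρ_1, …, ρ_m` be irreducible representations of a finite
group `G` on nonzero finite-dimensional complex vector spaces, with characters `χ_j`
and central characters `ψ_j`.  Assume (i) `⋂ ker ρ_j = 1` and (ii) the ratios
`ψ_j ψ_1⁻¹` generate the character group of the center.  Then the map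
`Φ h (j, g) = ∑_γ χ_j (g h⁻¹ γ)·χ_j (γ⁻¹)` projectively separates the points of
`(G × G)/G ≅ G`: if `Φ h = λ · Φ k` then `h = k`. -/
theorem coset_space_projective_embedding
    {G : Type*} [Group G] [Fintype G] {m : ℕ} (hm : 0 < m)
    (W : Fin m → Type*) [∀ j, AddCommGroup (W j)] [∀ j, Module ℂ (W j)]
    [∀ j, FiniteDimensional ℂ (W j)] [∀ j, Nontrivial (W j)]
    (ρ : ∀ j, Representation ℂ G (W j))
    (hirr : ∀ j, ∀ p : Submodule ℂ (W j),
      (∀ g : G, ∀ x ∈ p, ρ j g x ∈ p) → p = ⊥ ∨ p = ⊤)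
    (ψ : Fin m → (↥(Subgroup.center G) →* ℂˣ))
    (hψ : ∀ j, ∀ z : ↥(Subgroup.center G),
      ρ j (z : G) = ((ψ j z : ℂ) • (1 : W j →ₗ[ℂ] W j)))
    (hfaith : ∀ h : G, h ≠ 1 → ∃ j, ρ j h ≠ 1)
    (hcenter : Subgroup.closure
      (Set.range fun j : Fin m => ψ j * (ψ ⟨0, hm⟩)⁻¹) = ⊤) :
    ∀ h k : G, ∀ l : ℂ,
      (∀ j : Fin m, ∀ g : G,
        (∑ γ : G, LinearMap.trace ℂ (W j) (ρ j (g * h⁻¹ * γ))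
            * LinearMap.trace ℂ (W j) (ρ j γ⁻¹))
          = l * ∑ γ : G, LinearMap.trace ℂ (W j) (ρ j (g * k⁻¹ * γ))
            * LinearMap.trace ℂ (W j) (ρ j γ⁻¹)) → h = k := by
  intro h k l hyp
  have hd : ∀ j, ((Module.finrank ℂ (W j) : ℂ)) ≠ 0 := fun j => by
    exact_mod_cast (Module.finrank_pos (R := ℂ) (M := W j)).ne'
  have hn : ((Fintype.card G : ℂ)) ≠ 0 := by
    exact_mod_cast (Fintype.card_pos (α := G)).ne'
  -- translate the hypothesis via the convolution formula
  have key : ∀ j : Fin m, ∀ g : G,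
      LinearMap.trace ℂ (W j) (ρ j (g * h⁻¹)) = l * LinearMap.trace ℂ (W j) (ρ j (g * k⁻¹)) := by
    intro j g
    have h1 := hyp j g
    have hc : ((Fintype.card G : ℂ) / (Module.finrank ℂ (W j) : ℂ)) ≠ 0 :=
      div_ne_zero hn (hd j)
    have e1 : (∑ γ : G, LinearMap.trace ℂ (W j) (ρ j (g * h⁻¹ * γ))
        * LinearMap.trace ℂ (W j) (ρ j γ⁻¹))
        = ((Fintype.card G : ℂ) / (Module.finrank ℂ (W j) : ℂ))
          * LinearMap.trace ℂ (W j) (ρ j (g * h⁻¹)) := by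
      have := aux_conv (ρ j) (hirr j) (g * h⁻¹)
      simpa [mul_assoc] using this
    have e2 : (∑ γ : G, LinearMap.trace ℂ (W j) (ρ j (g * k⁻¹ * γ))
        * LinearMap.trace ℂ (W j) (ρ j γ⁻¹))
        = ((Fintype.card G : ℂ) / (Module.finrank ℂ (W j) : ℂ))
          * LinearMap.trace ℂ (W j) (ρ j (g * k⁻¹)) := by
      have := aux_conv (ρ j) (hirr j) (g * k⁻¹)
      simpa [mul_assoc] using this
    rw [e1, e2] at h1
    have h2 : ((Fintype.card G : ℂ) / (Module.finrank ℂ (W j) : ℂ))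
        * LinearMap.trace ℂ (W j) (ρ j (g * h⁻¹))
        = ((Fintype.card G : ℂ) / (Module.finrank ℂ (W j) : ℂ))
          * (l * LinearMap.trace ℂ (W j) (ρ j (g * k⁻¹))) := by
      rw [h1]; ring
    exact mul_left_cancel₀ hc h2
  -- l is nonzero
  set j0 : Fin m := ⟨0, hm⟩ with hj0
  have hl : l ≠ 0 := by
    intro hl0
    have := key j0 h
    rw [hl0, zero_mul, mul_inv_cancel] at this
    rw [map_one] at this
    exact hd j0 (by simpa [LinearMap.trace_one] using this)
  -- the element a = h k⁻¹ acts as the scalar l⁻¹ in every ρ_j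
  set a : G := h * k⁻¹ with ha
  have hrel : ∀ j : Fin m, ∀ x : G,
      LinearMap.trace ℂ (W j) (ρ j x) = l * LinearMap.trace ℂ (W j) (ρ j (x * a)) := by
    intro j x
    have := key j (x * h)
    have e1 : x * h * h⁻¹ = x := by group
    have e2 : x * h * k⁻¹ = x * a := by rw [ha]; group
    rwa [e1, e2] at this
  have hρa : ∀ j : Fin m, ρ j a = l⁻¹ • 1 := fun j =>
    aux_scalar (ρ j) (hirr j) a l hl (hrel j)
  -- ρ_j(a⁻¹) is the scalar l
  have hρainv : ∀ j : Fin m, ρ j a⁻¹ = l • 1 := by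
    intro j
    have h1 : ρ j a * (l • 1) = 1 := by
      rw [hρa j, smul_mul_smul_comm, one_mul, inv_mul_cancel₀ hl, one_smul]
    calc ρ j a⁻¹ = ρ j a⁻¹ * (ρ j a * (l • 1)) := by rw [h1, mul_one]
      _ = (ρ j a⁻¹ * ρ j a) * (l • 1) := by rw [mul_assoc]
      _ = l • 1 := by rw [← map_mul, inv_mul_cancel, map_one, one_mul]
  -- a is central
  have hacen : a ∈ Subgroup.center G := by
    rw [Subgroup.mem_center_iff]
    intro g
    have hcomm : ∀ j : Fin m, ρ j (a * g * a⁻¹ * g⁻¹) = 1 := by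
      intro j
      rw [map_mul, map_mul, map_mul, hρa j, hρainv j]
      simp only [smul_mul_assoc, one_mul, mul_smul_comm, mul_one, smul_smul]
      rw [mul_inv_cancel₀ hl, one_smul, ← map_mul (ρ j) g g⁻¹, mul_inv_cancel, map_one]
    have h1 : a * g * a⁻¹ * g⁻¹ = 1 := by
      by_contra hne
      obtain ⟨j, hj⟩ := hfaith _ hne
      exact hj (hcomm j)
    have h2 : a * g * a⁻¹ = g := by
      have := mul_eq_one_iff_eq_inv.mp h1
      simpa using this
    have h3 : a * g = g * a := by
      conv_rhs => rw [← h2]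
      group
    exact h3.symm
  set z : ↥(Subgroup.center G) := ⟨a, hacen⟩ with hz
  -- all central characters take the value l⁻¹ at z
  have hψz : ∀ j : Fin m, ((ψ j z : ℂ)) = l⁻¹ := by
    intro j
    have h1 : ρ j a = ((ψ j z : ℂ)) • 1 := hψ j z
    have h2 : ((ψ j z : ℂ)) • (1 : W j →ₗ[ℂ] W j) = l⁻¹ • 1 := by rw [← h1, hρa j]
    obtain ⟨v, hv⟩ := exists_ne (0 : W j)
    have h3 : ((ψ j z : ℂ)) • v = l⁻¹ • v := by
      have := congrFun (congrArg DFunLike.coe h2) v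
      simpa using this
    exact smul_left_injective ℂ hv h3
  have hψunits : ∀ j : Fin m, ψ j z = ψ j0 z := by
    intro j
    apply Units.ext
    rw [hψz j, hψz j0]
  -- every character of the center is 1 at z
  have hall : ∀ φ : (↥(Subgroup.center G) →* ℂˣ), φ z = 1 := by
    intro φ
    let S : Subgroup ((↥(Subgroup.center G)) →* ℂˣ) :=
      { carrier := {φ | φ z = 1}
        mul_mem' := by
          intro p q hp hq
          simp only [Set.mem_setOf_eq] at hp hq ⊢
          rw [MonoidHom.mul_apply, hp, hq, mul_one]
        one_mem' := by simp
        inv_mem' := by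
          intro p hp
          simp only [Set.mem_setOf_eq] at hp ⊢
          rw [MonoidHom.inv_apply, hp, inv_one] }
    have hle : Subgroup.closure
        (Set.range fun j : Fin m => ψ j * (ψ ⟨0, hm⟩)⁻¹) ≤ S := by
      rw [Subgroup.closure_le]
      rintro φ ⟨j, rfl⟩
      show (ψ j * (ψ ⟨0, hm⟩)⁻¹) z = 1
      rw [MonoidHom.mul_apply, MonoidHom.inv_apply]
      rw [hψunits j]
      exact mul_inv_cancel _
    rw [hcenter] at hle
    exact hle (Subgroup.mem_top φ)
  -- characters separate points of the finite abelian center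
  have hz1 : z = 1 := by
    by_contra hne
    have : NeZero ((Monoid.exponent ↥(Subgroup.center G) : ℂ)) := by
      refine ⟨?_⟩
      exact_mod_cast Monoid.exponent_ne_zero_of_finite
    open scoped IsMulCommutative in
    obtain ⟨φ, hφ⟩ :=
      CommGroup.exists_apply_ne_one_of_hasEnoughRootsOfUnity (↥(Subgroup.center G)) ℂ hne
    exact hφ (hall φ)
  have ha1 : a = 1 := by
    have := congrArg (Subtype.val) hz1
    exact this
  have hhk : h * k⁻¹ = 1 := by rw [← ha]; exact ha1
  exact mul_inv_eq_one.mp hhk
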